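/- Let G = (Z/p^k Z)^m and let (.,.): G × G → Z/p^k Z be an alternating bilinear form. Then there exist a natural number g and a monomorphism φ: G → (Z/p^k Z)^{2g} such that (a, b) = (φ(a), φ(b))_{p^k} for all a, b ∈ G, where (.,.)_{p^k} is the standard symplectic form on (Z/p^k Z)^{2g}. -/

import Mathlib

open scoped Matrix

def sympJ (g : ℕ) (R : Type) [CommRing R] : Matrix (Fin (2*g)) (Fin (2*g)) R :=
  fun i j => if (i : ℕ) + (j : ℕ) = 2*g - 1 then (if (i : ℕ) < (j : ℕ) then 1 else -1) else 0

def symp (g : ℕ) (R : Type) [CommRing R] (x y : Fin (2*g) → R) : R :=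
  x ⬝ᵥ (sympJ g R).mulVec y

section aux

variable {R : Type} [CommRing R]

/-- symp as a bilinear map -/
def sympBilin (g : ℕ) (R : Type) [CommRing R] :
    (Fin (2*g) → R) →ₗ[R] (Fin (2*g) → R) →ₗ[R] R :=
  LinearMap.mk₂ R (symp g R)
    (fun x x' y => by simp [symp, add_dotProduct])
    (fun c x y => by simp [symp, smul_dotProduct])
    (fun x y y' => by simp [symp, Matrix.mulVec_add, dotProduct_add])
    (fun c x y => by simp [symp, Matrix.mulVec_smul, dotProduct_smul])

/-- inner sum of symp collapses -/
theorem sympJ_mulVec (g : ℕ) (hg : 1 ≤ g) (y : Fin (2*g) → R) (i : Fin (2*g)) :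
    (sympJ g R).mulVec y i =
      (if (i : ℕ) < 2*g - 1 - (i : ℕ) then 1 else -1) * y ⟨2*g - 1 - i, by omega⟩ := by
  have hi := i.2
  rw [Matrix.mulVec, dotProduct]
  rw [Finset.sum_eq_single (⟨2*g - 1 - i, by omega⟩ : Fin (2*g))]
  · simp only [sympJ]
    have : (i:ℕ) + ((⟨2*g - 1 - i, by omega⟩ : Fin (2*g)) : ℕ) = 2*g-1 := by
      simp only [Fin.val_mk]; omega
    rw [if_pos this]
  · intro j _ hj
    have : (i : ℕ) + (j : ℕ) ≠ 2*g - 1 := by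
      intro h
      apply hj
      ext
      simp
      omega
    simp [sympJ, this]
  · intro h
    exact absurd (Finset.mem_univ _) h

end aux

/-- Every alternating bilinear form on `G = (ℤ/p^kℤ)^m` is induced, via some monomorphism
`φ : G → (ℤ/p^kℤ)^{2g}`, by the standard symplectic form on `(ℤ/p^kℤ)^{2g}`. -/
theorem stmt4 (p k m : ℕ) (hp : p.Prime) (hk : 1 ≤ k) (hm : 1 ≤ m)
    (B : (Fin m → ZMod (p^k)) →ₗ[ZMod (p^k)] (Fin m → ZMod (p^k)) →ₗ[ZMod (p^k)] ZMod (p^k))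
    (hB : ∀ a, B a a = 0) :
    ∃ (g : ℕ) (φ : (Fin m → ZMod (p^k)) →ₗ[ZMod (p^k)] (Fin (2*g) → ZMod (p^k))),
      Function.Injective φ ∧ ∀ a b, B a b = symp g (ZMod (p^k)) (φ a) (φ b) := by
  set R := ZMod (p^k) with hR
  -- the matrix of B
  set e : Fin m → (Fin m → R) := fun i => Pi.single i 1 with he
  set M : Matrix (Fin m) (Fin m) R := fun i j => B (e i) (e j) with hM
  have hMskew : ∀ i j, M j i = - M i j := by
    intro i j
    have h := hB (e i + e j)
    simp only [map_add, LinearMap.add_apply] at h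
    have hi : B (e i) (e i) = 0 := hB _
    have hj : B (e j) (e j) = 0 := hB _
    rw [hi, hj] at h
    simp only [hM]
    linear_combination h
  -- the "upper half" matrix
  set N : Matrix (Fin m) (Fin m) R := fun i j => if (i : ℕ) < (j : ℕ) then M i j else 0 with hN
  have hNM : ∀ i j, N i j - N j i = M i j := by
    intro i j
    simp only [hN]
    rcases lt_trichotomy (i : ℕ) (j : ℕ) with h | h | h
    · rw [if_pos h, if_neg (by omega)]; ring
    · have : i = j := Fin.ext h
      subst this
      rw [if_neg (by omega)]
      have := hB (e i)
      simp only [hM]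
      rw [this]; ring
    · rw [if_neg (by omega), if_pos h]
      rw [hMskew]; ring
  -- the embedding
  have key : ∀ i : Fin (2*m), ¬ (i : ℕ) < m → 2*m - 1 - (i : ℕ) < m := by
    intro i hi; have := i.2; omega
  set φfun : (Fin m → R) → (Fin (2*m) → R) := fun a i =>
    if h : (i : ℕ) < m then a ⟨i, h⟩
    else ∑ j, N ⟨2*m - 1 - i, key i h⟩ j * a j with hφfun
  have φadd : ∀ a b, φfun (a + b) = φfun a + φfun b := by
    intro a b
    funext i
    simp only [hφfun, Pi.add_apply]
    split_ifs with h
    · rfl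
    · rw [← Finset.sum_add_distrib]
      congr 1; funext j; ring
  have φsmul : ∀ (c : R) a, φfun (c • a) = c • φfun a := by
    intro c a
    funext i
    simp only [hφfun, Pi.smul_apply, smul_eq_mul]
    split_ifs with h
    · rfl
    · rw [Finset.mul_sum]
      congr 1; funext j; ring
  set φ : (Fin m → R) →ₗ[R] (Fin (2*m) → R) :=
    { toFun := φfun, map_add' := φadd, map_smul' := φsmul } with hφ
  refine ⟨m, φ, ?_, ?_⟩
  · -- injectivity
    intro a b hab
    funext j
    have h2 : (j : ℕ) < 2*m := by omega
    have := congrFun hab (⟨j, h2⟩ : Fin (2*m))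
    simp only [hφ, LinearMap.coe_mk, AddHom.coe_mk, hφfun] at this
    rw [dif_pos j.2, dif_pos j.2] at this
    simpa using this
  · -- the form identity
    intro a b
    have hBB : B = LinearMap.compl₁₂ (sympBilin m R) φ φ := by
      apply LinearMap.ext_basis (Pi.basisFun R (Fin m)) (Pi.basisFun R (Fin m))
      intro r s
      simp only [Pi.basisFun_apply, LinearMap.compl₁₂_apply]
      -- compute φ (e r)
      have hφe : ∀ r : Fin m, φ (Pi.single r 1) = fun i : Fin (2*m) =>
          if h : (i : ℕ) < m then (if (⟨i, h⟩ : Fin m) = r then (1:R) else 0)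
          else N ⟨2*m - 1 - i, key i h⟩ r := by
        intro r
        funext i
        simp only [hφ, LinearMap.coe_mk, AddHom.coe_mk, hφfun]
        by_cases h : (i : ℕ) < m
        · rw [dif_pos h, dif_pos h, Pi.single_apply]
        · rw [dif_neg h, dif_neg h]
          simp [Pi.single_apply]
      simp only [sympBilin, LinearMap.mk₂_apply]
      rw [hφe r, hφe s]
      set X : Fin (2*m) → R := fun i : Fin (2*m) =>
        if h : (i : ℕ) < m then (if (⟨i, h⟩ : Fin m) = r then (1:R) else 0)
        else N ⟨2*m - 1 - i, key i h⟩ r with hX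
      set Y : Fin (2*m) → R := fun i : Fin (2*m) =>
        if h : (i : ℕ) < m then (if (⟨i, h⟩ : Fin m) = s then (1:R) else 0)
        else N ⟨2*m - 1 - i, key i h⟩ s with hY
      have hr2 : (r : ℕ) < 2*m := by have := r.2; omega
      have hs2 : 2*m - 1 - (s : ℕ) < 2*m := by omega
      set r₁ : Fin (2*m) := ⟨r, hr2⟩ with hr₁
      set s₂ : Fin (2*m) := ⟨2*m - 1 - s, hs2⟩ with hs₂
      have hne : r₁ ≠ s₂ := by
        apply Fin.ne_of_val_ne
        show (r : ℕ) ≠ 2*m - 1 - (s : ℕ)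
        have := r.2; have := s.2
        omega
      show _ = symp m R X Y
      rw [symp, dotProduct]
      have hsum : ∀ i : Fin (2*m), X i * (sympJ m R).mulVec Y i =
          X i * ((if (i : ℕ) < 2*m - 1 - (i : ℕ) then (1:R) else -1) *
            Y ⟨2*m - 1 - i, by have := i.2; omega⟩) := by
        intro i
        rw [sympJ_mulVec m hm]
      rw [Finset.sum_congr rfl (fun i _ => hsum i)]
      have hsupp : ∀ i ∈ Finset.univ, i ∉ ({r₁, s₂} : Finset (Fin (2*m))) →
          X i * ((if (i : ℕ) < 2*m - 1 - (i : ℕ) then (1:R) else -1) *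
            Y ⟨2*m - 1 - i, by have := i.2; omega⟩) = 0 := by
        intro i _ hi
        simp only [Finset.mem_insert, Finset.mem_singleton] at hi
        push_neg at hi
        obtain ⟨hir, his⟩ := hi
        by_cases h : (i : ℕ) < m
        · -- X i = 0 since i ≠ r
          have hx0 : (⟨i, h⟩ : Fin m) ≠ r := by
            intro hc
            have hv : (i : ℕ) = (r : ℕ) := congrArg Fin.val hc
            exact hir (Fin.ext hv)
          simp only [hX, dif_pos h, if_neg hx0, zero_mul]
        · -- Y (2m-1-i) = 0 since 2m-1-i ≠ s
          have hlt : 2*m - 1 - (i : ℕ) < m := key i h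
          have hy0 : (⟨2*m - 1 - (i : ℕ), hlt⟩ : Fin m) ≠ s := by
            intro hc
            have hcv : 2*m - 1 - (i : ℕ) = (s : ℕ) := congrArg Fin.val hc
            refine his (Fin.ext ?_)
            show (i : ℕ) = 2*m - 1 - (s : ℕ)
            have := i.2
            omega
          simp only [hY, dif_pos hlt, if_neg hy0, mul_zero]
      rw [← Finset.sum_subset (Finset.subset_univ ({r₁, s₂} : Finset (Fin (2*m)))) hsupp]
      rw [Finset.sum_pair hne]
      have hval1 : X r₁ * ((if (r₁ : ℕ) < 2*m - 1 - (r₁ : ℕ) then (1:R) else -1) *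
          Y ⟨2*m - 1 - r₁, by have := r₁.2; omega⟩) = N r s := by
        have hrm : (r₁ : ℕ) < m := r.2
        have hXr : X r₁ = 1 := by
          have hrr : (⟨(r₁ : ℕ), hrm⟩ : Fin m) = r := Fin.ext rfl
          simp only [hX]
          rw [dif_pos hrm]
          simp [hrr]
        have hsgn : (r₁ : ℕ) < 2*m - 1 - (r₁ : ℕ) := by
          show (r : ℕ) < 2*m - 1 - (r : ℕ)
          have := r.2; omega
        have hnlt : ¬ (2*m - 1 - (r₁ : ℕ)) < m := by
          show ¬ (2*m - 1 - (r : ℕ)) < m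
          have := r.2; omega
        have hYr : Y ⟨2*m - 1 - r₁, by have := r₁.2; omega⟩ = N r s := by
          simp only [hY]
          rw [dif_neg hnlt]
          have hcongr : ∀ (x y : Fin m), (x : ℕ) = (y : ℕ) → N x s = N y s := by
            intro x y h; rw [Fin.ext h]
          refine hcongr _ r ?_
          show 2*m - 1 - (2*m - 1 - (r : ℕ)) = (r : ℕ)
          have := r.2; omega
        rw [hXr, hYr, if_pos hsgn]
        ring
      have hval2 : X s₂ * ((if (s₂ : ℕ) < 2*m - 1 - (s₂ : ℕ) then (1:R) else -1) *
          Y ⟨2*m - 1 - s₂, by have := s₂.2; omega⟩) = - N s r := by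
        have hsm := s.2
        have hnlt : ¬ ((s₂ : ℕ) < m) := by
          show ¬ (2*m - 1 - (s : ℕ) < m); omega
        have hXs : X s₂ = N s r := by
          simp only [hX]
          rw [dif_neg hnlt]
          have hcongr : ∀ (x y : Fin m), (x : ℕ) = (y : ℕ) → N x r = N y r := by
            intro x y h; rw [Fin.ext h]
          refine hcongr _ s ?_
          show 2*m - 1 - (2*m - 1 - (s : ℕ)) = (s : ℕ)
          omega
        have hsgn : ¬ ((s₂ : ℕ) < 2*m - 1 - (s₂ : ℕ)) := by
          show ¬ (2*m - 1 - (s : ℕ) < 2*m - 1 - (2*m - 1 - (s : ℕ))); omega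
        have hslt : 2*m - 1 - (s₂ : ℕ) < m := by
          show 2*m - 1 - (2*m - 1 - (s : ℕ)) < m; omega
        have hYs : Y ⟨2*m - 1 - s₂, by have := s₂.2; omega⟩ = 1 := by
          simp only [hY]
          have hss : (⟨2*m - 1 - (s₂ : ℕ), hslt⟩ : Fin m) = s :=
            Fin.ext (show 2*m - 1 - (2*m - 1 - (s : ℕ)) = (s : ℕ) by omega)
          rw [dif_pos hslt]
          simp [hss]
        rw [hXs, hYs, if_neg hsgn]
        ring
      rw [hval1, hval2]
      show M r s = N r s + - N s r
      rw [← hNM r s]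
      ring
    rw [hBB]
    rfl
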